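/- In the electricity pool model (P2), let E₀ = 2·max_{1 ≤ k ≤ T} |Σ_{t=1}^k (d̄ − d_t)|. For every E ≥ E₀, the control u_t = d̄ − d_t is feasible, it is optimal, and C*(E) = T·C(d̄); consequently the unique optimal generation profile satisfies g*_t(E) = d̄ for all t. -/

import Mathlib

open Finset Filter

/-- Feasibility for the electricity pool model (P2) at storage capacity `E`:
the states of charge `x_k = E/2 + ∑_{t ≤ k} u t` (with `x_0 = E/2`) satisfy
`0 ≤ x_k ≤ E` for all `k`, and the terminal condition `x_T = E/2` holds. -/
def poolFeasible (T : ℕ) (E : ℝ) (u : Fin T → ℝ) : Prop :=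
  (∀ k : Fin T, 0 ≤ E / 2 + ∑ t ∈ Finset.Iic k, u t) ∧
  (∀ k : Fin T, E / 2 + ∑ t ∈ Finset.Iic k, u t ≤ E) ∧
  E / 2 + ∑ t, u t = E / 2

/-- Total generation cost `∑ t C (d t + u t)` with `C g = (1/2)·a·g² + b·g + c`. -/
noncomputable def poolCost (T : ℕ) (a b c : ℝ) (d u : Fin T → ℝ) : ℝ :=
  ∑ t, ((1 / 2) * a * (d t + u t) ^ 2 + b * (d t + u t) + c)

/-- Optimal cost `C*(E)` of the pool model (P2). -/
noncomputable def poolCstar (T : ℕ) (a b c : ℝ) (d : Fin T → ℝ) (E : ℝ) : ℝ :=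
  sInf {y : ℝ | ∃ u : Fin T → ℝ, poolFeasible T E u ∧ y = poolCost T a b c d u}

lemma pool_cost_decomp (T : ℕ) (hT : 1 ≤ T) (a b c : ℝ) (d u : Fin T → ℝ)
    (hu : ∑ t, u t = 0) :
    poolCost T a b c d u =
      (T : ℝ) * ((1 / 2) * a * ((∑ s, d s) / (T : ℝ)) ^ 2
          + b * ((∑ s, d s) / (T : ℝ)) + c)
        + (1 / 2) * a * ∑ t, (d t + u t - (∑ s, d s) / (T : ℝ)) ^ 2 := by
  have hT0 : (T : ℝ) ≠ 0 := Nat.cast_ne_zero.mpr (by omega)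
  set m : ℝ := (∑ s, d s) / (T : ℝ) with hm
  have hg : ∑ t, (d t + u t - m) = 0 := by
    rw [Finset.sum_sub_distrib, Finset.sum_add_distrib, hu, Finset.sum_const,
      Finset.card_univ, Fintype.card_fin, nsmul_eq_mul, hm]
    field_simp
    ring
  have key : ∀ t : Fin T, (1 / 2) * a * (d t + u t) ^ 2 + b * (d t + u t) + c
      = (((1 / 2) * a * m ^ 2 + b * m + c) + (1 / 2) * a * (d t + u t - m) ^ 2)
        + (a * m + b) * (d t + u t - m) := by
    intro t; ring
  unfold poolCost
  rw [Finset.sum_congr rfl (fun t _ => key t), Finset.sum_add_distrib,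
    Finset.sum_add_distrib]
  have h1 : ∑ x : Fin T, (a * m + b) * (d x + u x - m) = 0 := by
    rw [← Finset.mul_sum, hg, mul_zero]
  rw [h1, add_zero, ← Finset.mul_sum, Finset.sum_const, Finset.card_univ,
    Fintype.card_fin, nsmul_eq_mul]

/-- In the pool model (P2), let
`E₀ = 2·max_{1 ≤ k ≤ T} |∑_{t=1}^k (d̄ − d t)|`. For every `E ≥ E₀`, the control
`u t = d̄ − d t` is feasible and optimal, `C*(E) = T·C(d̄)`, and the unique
optimal generation profile satisfies `g*_t(E) = d̄` for all `t`. Here `gstar`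
is any selection of optimal generation profiles. -/
theorem pool_flat_optimum_for_large_capacity
    (T : ℕ) (hT : 1 ≤ T) (a b c : ℝ) (ha : 0 < a) (d : Fin T → ℝ)
    (gstar : ℝ → Fin T → ℝ)
    (hgstar : ∀ E : ℝ, 0 ≤ E → ∃ u : Fin T → ℝ, poolFeasible T E u ∧
      (∀ t, gstar E t = d t + u t) ∧
      poolCost T a b c d u = poolCstar T a b c d E) :
    ∀ E : ℝ,
      2 * Finset.univ.sup' ⟨⟨0, hT⟩, Finset.mem_univ _⟩
          (fun k : Fin T => |∑ t ∈ Finset.Iic k, ((∑ s, d s) / (T : ℝ) - d t)|) ≤ E →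
      poolFeasible T E (fun t => (∑ s, d s) / (T : ℝ) - d t) ∧
      poolCost T a b c d (fun t => (∑ s, d s) / (T : ℝ) - d t)
        = poolCstar T a b c d E ∧
      poolCstar T a b c d E =
        (T : ℝ) * ((1 / 2) * a * ((∑ s, d s) / (T : ℝ)) ^ 2
          + b * ((∑ s, d s) / (T : ℝ)) + c) ∧
      (∀ t, gstar E t = (∑ s, d s) / (T : ℝ)) := by
  intro E hE
  have hT0 : (T : ℝ) ≠ 0 := Nat.cast_ne_zero.mpr (by omega)
  set m : ℝ := (∑ s, d s) / (T : ℝ) with hm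
  set Cm : ℝ := (1 / 2) * a * m ^ 2 + b * m + c with hCm
  -- E is nonneg
  have hEnn : 0 ≤ E := by
    refine le_trans ?_ hE
    have h1 : (0:ℝ) ≤ |∑ t ∈ Finset.Iic (⟨0, hT⟩ : Fin T), (m - d t)| := abs_nonneg _
    have h2 := Finset.le_sup' (fun k : Fin T => |∑ t ∈ Finset.Iic k, (m - d t)|)
      (Finset.mem_univ (⟨0, hT⟩ : Fin T))
    nlinarith
  -- partial-sum bounds
  have hbound : ∀ k : Fin T, |∑ t ∈ Finset.Iic k, (m - d t)| ≤ E / 2 := by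
    intro k
    have h2 := Finset.le_sup' (fun k : Fin T => |∑ t ∈ Finset.Iic k, (m - d t)|)
      (Finset.mem_univ k)
    have := le_trans (by exact_mod_cast h2) (by linarith : Finset.univ.sup' ⟨⟨0, hT⟩, Finset.mem_univ _⟩
          (fun k : Fin T => |∑ t ∈ Finset.Iic k, (m - d t)|) ≤ E / 2)
    exact this
  have husum : ∑ t, (m - d t) = 0 := by
    rw [Finset.sum_sub_distrib, Finset.sum_const, Finset.card_univ, Fintype.card_fin,
      nsmul_eq_mul, hm]
    field_simp
    ring
  have hfeas : poolFeasible T E (fun t => m - d t) := by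
    refine ⟨fun k => ?_, fun k => ?_, by rw [husum, add_zero]⟩
    · have := (abs_le.mp (hbound k)).1; linarith
    · have := (abs_le.mp (hbound k)).2; linarith
  -- cost of flat control
  have hcostbar : poolCost T a b c d (fun t => m - d t) = (T : ℝ) * Cm := by
    rw [pool_cost_decomp T hT a b c d _ husum]
    simp [hm]
    left
    rw [hCm, hm]; ring
  -- lower bound for every feasible u
  have hlb : ∀ u : Fin T → ℝ, poolFeasible T E u →
      (T : ℝ) * Cm ≤ poolCost T a b c d u := by
    intro u hu
    have hu0 : ∑ t, u t = 0 := by linarith [hu.2.2]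
    rw [pool_cost_decomp T hT a b c d u hu0]
    have : 0 ≤ (1 / 2) * a * ∑ t, (d t + u t - m) ^ 2 := by
      have : 0 ≤ ∑ t, (d t + u t - m) ^ 2 :=
        Finset.sum_nonneg (fun t _ => sq_nonneg _)
      positivity
    simp only [← hm, ← hCm]
    linarith
  -- C* = T * Cm
  have hCstar : poolCstar T a b c d E = (T : ℝ) * Cm := by
    have hmem : (T : ℝ) * Cm ∈
        {y : ℝ | ∃ u : Fin T → ℝ, poolFeasible T E u ∧ y = poolCost T a b c d u} :=
      ⟨fun t => m - d t, hfeas, hcostbar.symm⟩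
    have hbdd : BddBelow
        {y : ℝ | ∃ u : Fin T → ℝ, poolFeasible T E u ∧ y = poolCost T a b c d u} := by
      refine ⟨(T : ℝ) * Cm, ?_⟩
      rintro y ⟨u, hu, rfl⟩
      exact hlb u hu
    unfold poolCstar
    refine le_antisymm (csInf_le hbdd hmem) (le_csInf ⟨_, hmem⟩ ?_)
    rintro y ⟨u, hu, rfl⟩
    exact hlb u hu
  refine ⟨hfeas, by rw [hcostbar, hCstar], by rw [hCstar], ?_⟩
  -- gstar is flat
  obtain ⟨u, hufeas, hgu, hucost⟩ := hgstar E hEnn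
  have hu0 : ∑ t, u t = 0 := by linarith [hufeas.2.2]
  have hdecomp := pool_cost_decomp T hT a b c d u hu0
  rw [hucost, hCstar] at hdecomp
  have hsq : ∑ t, (d t + u t - m) ^ 2 = 0 := by
    have h2 : (1 / 2) * a * ∑ t, (d t + u t - m) ^ 2 = 0 := by
      simp only [← hm, ← hCm] at hdecomp; linarith
    have ha2 : (1 / 2) * a ≠ 0 := by positivity
    exact (mul_eq_zero.mp h2).resolve_left ha2
  intro t
  have ht : (d t + u t - m) ^ 2 = 0 := by
    have := (Finset.sum_eq_zero_iff_of_nonneg (fun t _ => sq_nonneg (d t + u t - m))).mp hsq t (Finset.mem_univ t)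
    exact this
  have : d t + u t = m := by nlinarith [sq_nonneg (d t + u t - m)]
  rw [hgu t, this]
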